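/- The sum of the ridge leverage scores of the columns of a matrix A is at most 2k. That is, for A ∈ ℝ^{n×d} of rank at least k, with λ = (1/k)‖A − A_k‖_F², the sum over all columns i of a_iᵀ (A Aᵀ + λ I)⁺ a_i is at most 2k. -/

import Mathlib

open Matrix BigOperators Finset

noncomputable section

/-- Squared Frobenius norm of a real matrix. -/
def frobSq {m n : Type*} [Fintype m] [Fintype n] (A : Matrix m n ℝ) : ℝ :=
  ∑ i, ∑ j, (A i j) ^ 2

lemma frobSq_nonneg {m n : Type*} [Fintype m] [Fintype n] (A : Matrix m n ℝ) :
    0 ≤ frobSq A :=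
  Finset.sum_nonneg fun _ _ => Finset.sum_nonneg fun _ _ => sq_nonneg _

lemma frobSq_eq_trace {m n : Type*} [Fintype m] [Fintype n] (A : Matrix m n ℝ) :
    frobSq A = (A * Aᵀ).trace := by
  simp [frobSq, Matrix.trace, Matrix.mul_apply, Matrix.diag, sq]

/-- existence of a "top k" index set -/
lemma exists_topk {N k : ℕ} (μ : Fin N → ℝ) (hk : k ≤ N) :
    ∃ S : Finset (Fin N), S.card = k ∧ ∀ i ∈ S, ∀ j ∉ S, μ j ≤ μ i := by
  classical
  have hne : (Finset.univ.powersetCard k (α := Fin N)).Nonempty := by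
    obtain ⟨B, hB, hcard⟩ := Finset.exists_subset_card_eq (s := (Finset.univ : Finset (Fin N))) (n := k)
      (by simpa using hk)
    exact ⟨B, Finset.mem_powersetCard.mpr ⟨hB, hcard⟩⟩
  obtain ⟨S, hS, hmax⟩ := Finset.exists_max_image _ (fun S => ∑ i ∈ S, μ i) hne
  have hcard : S.card = k := (Finset.mem_powersetCard.mp hS).2
  refine ⟨S, hcard, ?_⟩
  intro i hi j hj
  by_contra hlt
  push_neg at hlt
  set S' : Finset (Fin N) := insert j (S.erase i) with hS'
  have hjni : j ∉ S.erase i := fun h => hj (Finset.mem_of_mem_erase h)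
  have hcard' : S'.card = k := by
    have h1k : 1 ≤ S.card := Finset.card_pos.mpr ⟨i, hi⟩
    rw [hS', Finset.card_insert_of_notMem hjni, Finset.card_erase_of_mem hi, hcard]
    omega
  have hmem' : S' ∈ Finset.univ.powersetCard k := by
    simp [Finset.mem_powersetCard, hcard']
  have hsum' : ∑ x ∈ S', μ x = ∑ x ∈ S, μ x - μ i + μ j := by
    rw [hS', Finset.sum_insert hjni, Finset.sum_erase_eq_sub hi]; ring
  have := hmax S' hmem'
  rw [hsum'] at this
  linarith

/-- Ky Fan style numeric inequality -/
lemma kyfan_aux {N : ℕ} (μ p : Fin N → ℝ) (S : Finset (Fin N))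
    (hμ : ∀ i, 0 ≤ μ i) (hp0 : ∀ i, 0 ≤ p i) (hp1 : ∀ i, p i ≤ 1)
    (htop : ∀ i ∈ S, ∀ j ∉ S, μ j ≤ μ i)
    (hsum : ∑ i, p i ≤ S.card) :
    ∑ i, p i * μ i ≤ ∑ i ∈ S, μ i := by
  classical
  rcases S.eq_empty_or_nonempty with h0 | hSne
  · subst h0
    simp only [Finset.card_empty, Nat.cast_zero, Finset.sum_empty] at hsum ⊢
    have hz : ∀ i ∈ Finset.univ, p i = 0 :=
      fun i _ => le_antisymm (by
        by_contra h
        push_neg at h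
        have : (0:ℝ) < ∑ i, p i :=
          lt_of_lt_of_le h (Finset.single_le_sum (fun j _ => hp0 j) (Finset.mem_univ i))
        linarith) (hp0 i)
    calc ∑ i, p i * μ i = 0 := Finset.sum_eq_zero fun i hi => by rw [hz i hi, zero_mul]
    _ ≤ 0 := le_refl _
  · set m := S.inf' hSne μ with hm
    have hmle : ∀ i ∈ S, m ≤ μ i := fun i hi => Finset.inf'_le _ hi
    have hm0 : 0 ≤ m := by
      obtain ⟨i, hi, hie⟩ := Finset.exists_mem_eq_inf' hSne μ
      rw [hm, hie]; exact hμ i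
    have hout : ∀ j ∉ S, μ j ≤ m := by
      intro j hj
      exact Finset.le_inf' hSne _ (fun i hi => htop i hi j hj)
    have hsplit : ∑ i, p i * μ i
        = ∑ i ∈ S, p i * μ i + ∑ i ∈ Finset.univ \ S, p i * μ i := by
      rw [add_comm, Finset.sum_sdiff (Finset.subset_univ S)]
    have hsplit2 : ∑ i, p i = ∑ i ∈ S, p i + ∑ i ∈ Finset.univ \ S, p i := by
      rw [add_comm, Finset.sum_sdiff (Finset.subset_univ S)]
    have h1 : ∑ i ∈ Finset.univ \ S, p i * μ i ≤ m * ∑ i ∈ Finset.univ \ S, p i := by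
      rw [Finset.mul_sum]
      apply Finset.sum_le_sum
      intro i hi
      have hiS : i ∉ S := (Finset.mem_sdiff.mp hi).2
      calc p i * μ i ≤ p i * m := by
            exact mul_le_mul_of_nonneg_left (hout i hiS) (hp0 i)
      _ = m * p i := mul_comm _ _
    have h2 : ∑ i ∈ Finset.univ \ S, p i ≤ (S.card : ℝ) - ∑ i ∈ S, p i := by
      have := hsplit2 ▸ hsum
      linarith
    have h3 : m * ∑ i ∈ Finset.univ \ S, p i ≤ m * ((S.card : ℝ) - ∑ i ∈ S, p i) :=
      mul_le_mul_of_nonneg_left h2 hm0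
    have h4 : m * ((S.card : ℝ) - ∑ i ∈ S, p i) = ∑ i ∈ S, m * (1 - p i) := by
      simp only [mul_sub, mul_one, Finset.sum_sub_distrib, Finset.sum_const, nsmul_eq_mul,
        ← Finset.mul_sum]
      ring
    have h5 : ∑ i ∈ S, m * (1 - p i) ≤ ∑ i ∈ S, μ i * (1 - p i) := by
      apply Finset.sum_le_sum
      intro i hi
      exact mul_le_mul_of_nonneg_right (hmle i hi) (by linarith [hp1 i])
    have h6 : ∑ i ∈ S, p i * μ i + ∑ i ∈ S, μ i * (1 - p i) = ∑ i ∈ S, μ i := by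
      rw [← Finset.sum_add_distrib]
      apply Finset.sum_congr rfl
      intro i _
      ring
    linarith


lemma exists_partial_isometry {n d : ℕ} (Ak : Matrix (Fin n) (Fin d) ℝ) :
    ∃ (r : ℕ) (C : Matrix (Fin n) (Fin r) ℝ), r = Ak.rank ∧ Cᵀ * C = 1 ∧ C * Cᵀ * Ak = Ak := by
  classical
  set le : (Fin n → ℝ) ≃ₗ[ℝ] EuclideanSpace ℝ (Fin n) :=
    (WithLp.linearEquiv 2 ℝ (Fin n → ℝ)).symm with hle
  set V : Submodule ℝ (EuclideanSpace ℝ (Fin n)) :=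
    LinearMap.range (le.toLinearMap ∘ₗ Ak.mulVecLin) with hVdef
  have hVr : Module.finrank ℝ V = Ak.rank := by
    rw [hVdef, LinearMap.range_comp]
    exact le.finrank_map_eq _
  set r : ℕ := Module.finrank ℝ V with hr
  set b : OrthonormalBasis (Fin r) ℝ V := stdOrthonormalBasis ℝ V with hb
  set C : Matrix (Fin n) (Fin r) ℝ :=
    Matrix.of (fun i j => ((b j : EuclideanSpace ℝ (Fin n)) i)) with hC
  have sum_apply_E : ∀ (f : Fin r → EuclideanSpace ℝ (Fin n)) (i : Fin n),
      (∑ j, f j) i = ∑ j, f j i :=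
    fun f i => by rw [WithLp.ofLp_sum]; exact Finset.sum_apply i Finset.univ (fun j => (f j : Fin n → ℝ))
  have hCtC : Cᵀ * C = 1 := by
    ext j j'
    have horth := (orthonormal_iff_ite.mp b.orthonormal) j j'
    rw [Submodule.coe_inner, PiLp.inner_apply] at horth
    simp only [RCLike.inner_apply, starRingEnd_apply, star_trivial] at horth
    simp only [Matrix.mul_apply, Matrix.transpose_apply, Matrix.one_apply, hC, Matrix.of_apply]
    rw [← horth]; exact Finset.sum_congr rfl fun _ _ => mul_comm _ _
  have key : ∀ v : Fin n → ℝ, le v ∈ V → (C * Cᵀ) *ᵥ v = v := by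
    intro v hv
    have hrepr := b.sum_repr' (⟨le v, hv⟩ : V)
    have hco := congrArg (Subtype.val) hrepr
    simp only [AddSubmonoidClass.coe_finset_sum, SetLike.val_smul] at hco
    have hinner : ∀ j, (inner ℝ (b j) (⟨le v, hv⟩ : V) : ℝ) = ∑ l, C l j * v l := by
      intro j
      rw [Submodule.coe_inner, PiLp.inner_apply]
      simp only [RCLike.inner_apply, starRingEnd_apply, star_trivial]
      exact Finset.sum_congr rfl fun _ _ => mul_comm _ _
    funext i
    have hcoord := congrFun (congrArg (fun (x : EuclideanSpace ℝ (Fin n)) => (x : Fin n → ℝ)) hco) i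
    simp only at hcoord
    rw [sum_apply_E] at hcoord
    have hvi : (le v : Fin n → ℝ) i = v i := rfl
    have hbC : ∀ j, ((b j : EuclideanSpace ℝ (Fin n)) : Fin n → ℝ) i = C i j := fun j => rfl
    have hsmul : ∀ j, ((inner ℝ (b j) (⟨le v, hv⟩ : V) : ℝ) • (b j : EuclideanSpace ℝ (Fin n))) i
        = (∑ l, C l j * v l) * C i j := by
      intro j
      rw [PiLp.smul_apply, smul_eq_mul, hinner j, hbC j]
    rw [Finset.sum_congr rfl (fun j _ => hsmul j)] at hcoord
    have hLHS : ((C * Cᵀ) *ᵥ v) i = ∑ j, (∑ l, C l j * v l) * C i j := by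
      simp only [Matrix.mulVec, dotProduct, Matrix.mul_apply, Matrix.transpose_apply,
        Finset.sum_mul]
      rw [Finset.sum_comm]
      apply Finset.sum_congr rfl
      intro j _
      apply Finset.sum_congr rfl
      intro l _
      ring
    rw [hLHS, hcoord, hvi]
  refine ⟨r, C, hVr, hCtC, ?_⟩
  ext i j
  have hvmem : le (fun l => Ak l j) ∈ V := by
    refine ⟨Pi.single j 1, ?_⟩
    simp only [LinearMap.comp_apply, Matrix.mulVecLin_apply, LinearEquiv.coe_coe]
    congr 1
    funext l
    simp [Matrix.mulVec_single]
  have hkey := congrFun (key _ hvmem) i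
  calc (C * Cᵀ * Ak) i j = ((C * Cᵀ) *ᵥ (fun l => Ak l j)) i := by
        simp [Matrix.mul_apply, Matrix.mulVec, dotProduct]
  _ = Ak i j := hkey


lemma sandwich_mul {n : ℕ} (U X Y Vt : Matrix (Fin n) (Fin n) ℝ) (h : Vt * U = 1) :
    (U * X * Vt) * (U * Y * Vt) = U * (X * Y) * Vt := by
  simp only [Matrix.mul_assoc]
  rw [← Matrix.mul_assoc Vt U (Y * Vt), h, Matrix.one_mul]

lemma trace_conj {n : ℕ} (U X Vt : Matrix (Fin n) (Fin n) ℝ) (h : Vt * U = 1) :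
    (U * X * Vt).trace = X.trace := by
  rw [Matrix.trace_mul_cycle, h, Matrix.one_mul]

/-- The sum of the ridge leverage scores of the columns of `A`, with ridge parameter
`λ = (1/k) ‖A - A_k‖_F²` (where `A_k` is a best rank-`k` approximation of `A` in
Frobenius norm), is at most `2k`.  The ridge leverage score of column `i` is
`aᵢᵀ (A Aᵀ + λ I)⁻¹ aᵢ = (Aᵀ (A Aᵀ + λ I)⁻¹ A) i i`. -/
theorem ridge_leverage_sum_le_two_k {n d k : ℕ} (hk : 1 ≤ k)
    (A Ak : Matrix (Fin n) (Fin d) ℝ)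
    (hrank : k ≤ A.rank)
    (hAk_rank : Ak.rank ≤ k)
    (hAk_opt : ∀ B : Matrix (Fin n) (Fin d) ℝ, B.rank ≤ k →
      frobSq (A - Ak) ≤ frobSq (A - B))
    (lam : ℝ) (hlam : lam = 1 / (k : ℝ) * frobSq (A - Ak)) (hlam_pos : 0 < lam) :
    ∑ i, ((Aᵀ * (A * Aᵀ + lam • 1)⁻¹ * A : Matrix (Fin d) (Fin d) ℝ)) i i ≤ 2 * (k : ℝ) := by
  classical
  have hkn : k ≤ n := le_trans hrank (by simpa using A.rank_le_card_height)
  have hk0 : (k : ℝ) ≠ 0 := Nat.cast_ne_zero.mpr (by omega)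
  have hklam : (k : ℝ) * lam = frobSq (A - Ak) := by
    rw [hlam]; field_simp
  set M : Matrix (Fin n) (Fin n) ℝ := A * Aᵀ with hMdef
  have hM : M.IsHermitian := by
    rw [hMdef, ← Matrix.conjTranspose_eq_transpose_of_trivial]
    exact Matrix.isHermitian_mul_conjTranspose_self A
  have hMpsd : M.PosSemidef := by
    rw [hMdef, ← Matrix.conjTranspose_eq_transpose_of_trivial]
    exact Matrix.posSemidef_self_mul_conjTranspose A
  set μ : Fin n → ℝ := hM.eigenvalues with hμdef
  have hμ0 : ∀ i, 0 ≤ μ i := fun i => hMpsd.eigenvalues_nonneg i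
  set U : Matrix (Fin n) (Fin n) ℝ := (hM.eigenvectorUnitary : Matrix (Fin n) (Fin n) ℝ)
    with hUdef
  have hUU : U * Uᵀ = 1 := by
    have h := Unitary.coe_mul_star_self hM.eigenvectorUnitary
    rwa [Unitary.coe_star, Matrix.star_eq_conjTranspose,
      Matrix.conjTranspose_eq_transpose_of_trivial] at h
  have hUtU : Uᵀ * U = 1 := by
    have h := Unitary.coe_star_mul_self hM.eigenvectorUnitary
    rwa [Matrix.star_eq_conjTranspose,
      Matrix.conjTranspose_eq_transpose_of_trivial] at h
  have spec : M = U * Matrix.diagonal μ * Uᵀ := by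
    have h := hM.spectral_theorem
    rw [Unitary.conjStarAlgAut_apply, Matrix.star_eq_conjTranspose, Matrix.conjTranspose_eq_transpose_of_trivial] at h
    have hdiag : Matrix.diagonal (RCLike.ofReal ∘ μ) = Matrix.diagonal μ := by
      congr 1
    rwa [hdiag] at h
  -- the inverse
  have hne : ∀ i, 0 < μ i + lam := fun i => by linarith [hμ0 i]
  have hsmul1 : (lam • (1 : Matrix (Fin n) (Fin n) ℝ)) = Matrix.diagonal (fun _ => lam) := by
    ext i j
    by_cases h : i = j <;> simp [h, Matrix.one_apply, Matrix.diagonal_apply]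
  have hMlam : M + lam • 1 = U * Matrix.diagonal (fun i => μ i + lam) * Uᵀ := by
    have h1 : (lam • (1 : Matrix (Fin n) (Fin n) ℝ)) = U * (lam • 1) * Uᵀ := by
      rw [Matrix.mul_smul, Matrix.mul_one, Matrix.smul_mul, hUU]
    rw [spec]
    nth_rewrite 1 [h1]
    rw [← Matrix.add_mul, ← Matrix.mul_add, hsmul1, Matrix.diagonal_add]
  have hinv : (M + lam • 1)⁻¹ = U * Matrix.diagonal (fun i => (μ i + lam)⁻¹) * Uᵀ := by
    apply Matrix.inv_eq_right_inv
    rw [hMlam, sandwich_mul _ _ _ _ hUtU, Matrix.diagonal_mul_diagonal]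
    have : (fun i => (μ i + lam) * (μ i + lam)⁻¹) = fun _ => (1:ℝ) := by
      funext i; exact mul_inv_cancel₀ (ne_of_gt (hne i))
    rw [this, Matrix.diagonal_one, Matrix.mul_one, hUU]
  -- LHS as a sum of eigenvalue ratios
  have hLHS : ∑ i, ((Aᵀ * (M + lam • 1)⁻¹ * A : Matrix (Fin d) (Fin d) ℝ)) i i
      = ∑ i, μ i * (μ i + lam)⁻¹ := by
    have h1 : ∑ i, ((Aᵀ * (M + lam • 1)⁻¹ * A : Matrix (Fin d) (Fin d) ℝ)) i i
        = (Aᵀ * (M + lam • 1)⁻¹ * A).trace := rfl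
    rw [h1, Matrix.trace_mul_cycle, ← hMdef, hinv, spec, sandwich_mul _ _ _ _ hUtU,
      trace_conj _ _ _ hUtU, Matrix.diagonal_mul_diagonal, Matrix.trace_diagonal]
  -- choose top-k index set and partial isometry
  obtain ⟨S, hScard, hStop⟩ := exists_topk μ hkn
  obtain ⟨r, C, hrC, hCtC, hPAk⟩ := exists_partial_isometry Ak
  have hrk : r ≤ k := hrC ▸ hAk_rank
  set P : Matrix (Fin n) (Fin n) ℝ := C * Cᵀ with hPdef
  have hPsymm : Pᵀ = P := by rw [hPdef, Matrix.transpose_mul, Matrix.transpose_transpose]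
  set W : Matrix (Fin n) (Fin r) ℝ := Uᵀ * C with hWdef
  have hWt : Wᵀ = Cᵀ * U := by rw [hWdef, Matrix.transpose_mul, Matrix.transpose_transpose]
  have hWtW : Wᵀ * W = 1 := by
    rw [hWt, hWdef, Matrix.mul_assoc, ← Matrix.mul_assoc U Uᵀ C, hUU, Matrix.one_mul, hCtC]
  have hWWt_symm : (W * Wᵀ)ᵀ = W * Wᵀ := by
    rw [Matrix.transpose_mul, Matrix.transpose_transpose]
  have hWWt_idem : (W * Wᵀ) * (W * Wᵀ) = W * Wᵀ := by
    rw [Matrix.mul_assoc, ← Matrix.mul_assoc Wᵀ W Wᵀ, hWtW, Matrix.one_mul]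
  set p : Fin n → ℝ := fun i => (W * Wᵀ) i i with hpdef
  have hp0 : ∀ i, 0 ≤ p i := by
    intro i
    have h : p i = ∑ j, (W i j)^2 := by
      simp [hpdef, Matrix.mul_apply, sq]
    rw [h]
    positivity
  have hp1 : ∀ i, p i ≤ 1 := by
    intro i
    have hsym : ∀ l, (W*Wᵀ) l i = (W*Wᵀ) i l := by
      intro l
      conv_lhs => rw [← hWWt_symm]
      rfl
    have hsq : p i = ∑ l, ((W*Wᵀ) i l)^2 := by
      have h1 : p i = (W * Wᵀ * (W * Wᵀ)) i i := by
        conv_rhs => rw [hWWt_idem]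
      rw [h1, Matrix.mul_apply]
      apply Finset.sum_congr rfl
      intro l _
      rw [hsym l, sq]
    have hterm : ((W*Wᵀ) i i)^2 ≤ ∑ l, ((W*Wᵀ) i l)^2 :=
      Finset.single_le_sum (fun l _ => sq_nonneg ((W*Wᵀ) i l)) (Finset.mem_univ i)
    nlinarith [hp0 i]
  have hpsum : ∑ i, p i = (r : ℝ) := by
    have h : ∑ i, p i = (W*Wᵀ).trace := rfl
    rw [h, Matrix.trace_mul_comm, hWtW, Matrix.trace_one]
    simp
  have htrPM : (P * M).trace = ∑ i, p i * μ i := by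
    have e1 : P * M = (P * U) * Matrix.diagonal μ * Uᵀ := by
      rw [spec]; simp only [Matrix.mul_assoc]
    rw [e1, Matrix.trace_mul_cycle]
    have e2 : Uᵀ * (P * U) = W * Wᵀ := by
      rw [hPdef, hWdef, hWt]; simp only [Matrix.mul_assoc]
    rw [e2]
    simp [Matrix.trace, Matrix.diag, Matrix.mul_diagonal, hpdef]
  have hKyFan : (P * M).trace ≤ ∑ i ∈ S, μ i := by
    rw [htrPM]
    apply kyfan_aux μ p S hμ0 hp0 hp1 hStop
    rw [hpsum, hScard]
    exact_mod_cast hrk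
  have htrM : M.trace = ∑ i, μ i := by
    rw [spec, trace_conj _ _ _ hUtU, Matrix.trace_diagonal]
  set Y : Matrix (Fin n) (Fin d) ℝ := A - Ak with hYdef
  have hPY : (P * (Y * Yᵀ)).trace = frobSq (Cᵀ * Y) := by
    have e1 : P * (Y * Yᵀ) = C * (Cᵀ * (Y * Yᵀ)) := by rw [hPdef, Matrix.mul_assoc]
    have e2 : (Cᵀ * Y) * (Yᵀ * C) = Cᵀ * (Y * Yᵀ) * C := by simp only [Matrix.mul_assoc]
    rw [e1, Matrix.trace_mul_comm, frobSq_eq_trace, Matrix.transpose_mul,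
      Matrix.transpose_transpose, e2]
  have hPY0 : 0 ≤ (P * (Y*Yᵀ)).trace := hPY ▸ frobSq_nonneg _
  have hAkP : Akᵀ * P = Akᵀ := by
    rw [← hPsymm, ← Matrix.transpose_mul, hPAk]
  have hQM : ((1 - P) * (Y * Yᵀ)).trace = M.trace - (P * M).trace := by
    have hPAk0 : (1 - P) * Ak = 0 := by
      rw [Matrix.sub_mul, Matrix.one_mul, hPAk, sub_self]
    have hYident : (1 - P) * Y = (1 - P) * A := by
      rw [hYdef, Matrix.mul_sub, hPAk0, sub_zero]
    have hcross : ((1-P)*(A*Akᵀ)).trace = 0 := by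
      have e3 : Akᵀ * (1 - P) = 0 := by
        rw [Matrix.mul_sub, Matrix.mul_one, hAkP, sub_self]
      rw [Matrix.trace_mul_comm, Matrix.mul_assoc, e3, Matrix.mul_zero, Matrix.trace_zero]
    calc ((1-P)*(Y*Yᵀ)).trace = (((1-P)*Y)*Yᵀ).trace := by rw [Matrix.mul_assoc]
    _ = ((1-P)*(A*Yᵀ)).trace := by rw [hYident, Matrix.mul_assoc]
    _ = ((1-P)*M).trace - ((1-P)*(A*Akᵀ)).trace := by
        rw [hYdef, Matrix.transpose_sub, Matrix.mul_sub, Matrix.mul_sub, Matrix.trace_sub, hMdef]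
    _ = ((1-P)*M).trace := by rw [hcross, sub_zero]
    _ = M.trace - (P*M).trace := by rw [Matrix.sub_mul, Matrix.one_mul, Matrix.trace_sub]
  have hFrob : frobSq Y = (P * (Y*Yᵀ)).trace + ((1-P)*(Y*Yᵀ)).trace := by
    rw [frobSq_eq_trace, ← Matrix.trace_add, ← Matrix.add_mul, add_sub_cancel, Matrix.one_mul]
  have hsplitμ : ∑ i, μ i = ∑ i ∈ S, μ i + ∑ i ∈ Finset.univ \ S, μ i := by
    rw [add_comm, Finset.sum_sdiff (Finset.subset_univ S)]
  have htail : ∑ i ∈ Finset.univ \ S, μ i ≤ (k:ℝ) * lam := by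
    have h1 : M.trace - (P*M).trace ≤ frobSq Y := by rw [hFrob, hQM]; linarith
    rw [htrM, hsplitμ] at h1
    rw [hklam]
    have := hKyFan
    linarith
  -- final assembly
  rw [hLHS]
  have hsplitf : ∑ i, μ i * (μ i + lam)⁻¹
      = ∑ i ∈ S, μ i * (μ i+lam)⁻¹ + ∑ i ∈ Finset.univ \ S, μ i*(μ i+lam)⁻¹ := by
    rw [add_comm, Finset.sum_sdiff (Finset.subset_univ S)]
  have hhead : ∑ i ∈ S, μ i * (μ i+lam)⁻¹ ≤ (k:ℝ) := by
    calc ∑ i ∈ S, μ i * (μ i+lam)⁻¹ ≤ ∑ i ∈ S, 1 := by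
          apply Finset.sum_le_sum
          intro i _
          rw [← div_eq_mul_inv, div_le_one (hne i)]
          linarith [hμ0 i]
    _ = (S.card : ℝ) := by simp
    _ = (k : ℝ) := by rw [hScard]
  have htailf : ∑ i ∈ Finset.univ \ S, μ i * (μ i+lam)⁻¹ ≤ (k:ℝ) := by
    have hstep : ∀ i, μ i * (μ i + lam)⁻¹ ≤ μ i * lam⁻¹ := by
      intro i
      apply mul_le_mul_of_nonneg_left _ (hμ0 i)
      apply inv_anti₀ hlam_pos
      linarith [hμ0 i]
    calc ∑ i ∈ Finset.univ \ S, μ i * (μ i + lam)⁻¹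
        ≤ ∑ i ∈ Finset.univ \ S, μ i * lam⁻¹ := Finset.sum_le_sum fun i _ => hstep i
    _ = (∑ i ∈ Finset.univ \ S, μ i) * lam⁻¹ := by rw [Finset.sum_mul]
    _ ≤ ((k:ℝ) * lam) * lam⁻¹ := by
        apply mul_le_mul_of_nonneg_right htail (inv_nonneg.mpr (le_of_lt hlam_pos))
    _ = (k:ℝ) := by field_simp
  rw [hsplitf]
  linarith
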